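/- Matched-arc pumping preserves paths: let π = p ++ c₁ ++ c₂ ++ s be a list of arcs forming a path, and suppose there are indices j < c₁.length and j' < c₂.length such that the arc at position j of c₁ equals the arc at position j' of c₂. Define the middle copy mid := c₂.take (j' + 1) ++ c₁.drop (j + 1). Then for every natural number m ≥ 0, the list p ++ c₁ ++ mid^m ++ c₂ ++ s is also a path, and (for nonempty c₁ and c₂) it has the same first arc and the same last arc as π. -/

import Mathlib

private lemma pump_aux {α : Type*} {R : α → α → Prop} (B C : List α) (hBne : B ≠ [])
    (hBc : List.Chain' R B) (hBh : B.head? = C.head?) :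
    ∀ (m : ℕ) (A : List α), List.Chain' R (A ++ C) → B.getLast? = A.getLast? →
      List.Chain' R (A ++ (List.replicate m B).flatten ++ C) := by
  intro m
  induction m with
  | zero => intro A h _; simpa using h
  | succ n ih =>
    intro A h hBl
    have hA := (List.isChain_append.1 h)
    have hAB : List.Chain' R (A ++ B) := by
      refine List.isChain_append.2 ⟨hA.1, hBc, ?_⟩
      intro x hx y hy
      exact hA.2.2 x hx y (by rwa [hBh] at hy)
    have hlast : (A ++ B).getLast? = A.getLast? := by
      rw [List.getLast?_append, ← hBl]
      cases hB : B.getLast? with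
      | none => exact absurd (List.getLast?_eq_none_iff.1 hB) hBne
      | some b => rfl
    have hABC : List.Chain' R ((A ++ B) ++ C) := by
      refine List.isChain_append.2 ⟨hAB, hA.2.1, ?_⟩
      intro x hx y hy
      rw [hlast] at hx
      exact hA.2.2 x hx y hy
    have := ih (A ++ B) hABC (hBl.trans hlast.symm)
    simpa [List.replicate_succ, List.append_assoc] using this

/-- Matched-arc pumping preserves paths: if `π = p ++ c₁ ++ c₂ ++ s` is a path and
some arc of `c₁` equals some arc of `c₂`, then inserting any number of copies of
the middle copy `mid := c₂.take (j' + 1) ++ c₁.drop (j + 1)` between `c₁` and `c₂`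
again yields a path, with the same first and last arcs. -/
theorem matched_arc_pumping {S N : Type*} (p c₁ c₂ s : List (N × S × N))
    (hpath : List.Chain' (fun a b => a.2.2 = b.1) (p ++ c₁ ++ c₂ ++ s))
    (j j' : ℕ) (hj : j < c₁.length) (hj' : j' < c₂.length)
    (heq : c₁.get ⟨j, hj⟩ = c₂.get ⟨j', hj'⟩)
    (m : ℕ) :
    List.Chain' (fun a b => a.2.2 = b.1)
      (p ++ c₁ ++ (List.replicate m (c₂.take (j' + 1) ++ c₁.drop (j + 1))).flatten ++ c₂ ++ s) ∧
    (p ++ c₁ ++ (List.replicate m (c₂.take (j' + 1) ++ c₁.drop (j + 1))).flatten ++ c₂ ++ s).head?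
      = (p ++ c₁ ++ c₂ ++ s).head? ∧
    (p ++ c₁ ++ (List.replicate m (c₂.take (j' + 1) ++ c₁.drop (j + 1))).flatten ++ c₂ ++ s).getLast?
      = (p ++ c₁ ++ c₂ ++ s).getLast? := by
  set R : (N × S × N) → (N × S × N) → Prop := fun a b => a.2.2 = b.1 with hR
  have hc₁ne : c₁ ≠ [] := List.ne_nil_of_length_pos (Nat.lt_of_le_of_lt (Nat.zero_le j) hj)
  have hc₂ne : c₂ ≠ [] := List.ne_nil_of_length_pos (Nat.lt_of_le_of_lt (Nat.zero_le j') hj')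
  set B : List (N × S × N) := c₂.take (j' + 1) ++ c₁.drop (j + 1) with hB
  have htne : c₂.take (j' + 1) ≠ [] := by
    apply List.ne_nil_of_length_pos
    simp [List.length_take]
    omega
  have hBne : B ≠ [] := by
    intro hcon
    exact htne (List.append_eq_nil_iff.1 hcon).1
  -- chains of the pieces
  have hpath' : List.Chain' R ((p ++ c₁) ++ (c₂ ++ s)) := by
    simpa [List.append_assoc] using hpath
  have h1 := List.isChain_append.1 hpath'
  have hchain_pc : List.Chain' R (p ++ c₁) := h1.1
  have hchain_cs : List.Chain' R (c₂ ++ s) := h1.2.1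
  have hchain_c1 : List.Chain' R c₁ := (List.isChain_append.1 hchain_pc).2.1
  have hchain_c2 : List.Chain' R c₂ := (List.isChain_append.1 hchain_cs).1
  -- key head?/getLast? facts
  have htake_last : (c₂.take (j' + 1)).getLast? = some (c₂.get ⟨j', hj'⟩) := by
    rw [List.getLast?_eq_getElem?]
    simp [List.length_take, Nat.min_eq_left (Nat.succ_le_of_lt hj'), List.getElem?_take,
      List.getElem?_eq_getElem hj']
  have hBh : B.head? = (c₂ ++ s).head? := by
    rw [hB, List.head?_append, List.head?_append, List.head?_take]
    simp only [Nat.succ_ne_zero, if_false]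
    cases hc : c₂.head? with
    | none => exact absurd (List.head?_eq_none_iff.1 hc) hc₂ne
    | some b => rfl
  have hc₁last : c₁.getLast? = some (c₁.getLast hc₁ne) := List.getLast?_eq_getLast _
  have hBl : B.getLast? = c₁.getLast? := by
    rw [hB, List.getLast?_append, List.getLast?_drop]
    by_cases hcase : c₁.length ≤ j + 1
    · have hjeq : j = c₁.length - 1 := by omega
      subst hjeq
      rw [if_pos hcase, htake_last, ← heq]
      simp [List.getLast?_eq_getElem?,
        List.getElem?_eq_getElem (show c₁.length - 1 < c₁.length by omega)]
    · rw [if_neg hcase, hc₁last]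
      rfl
  have hBchain : List.Chain' R B := by
    refine List.isChain_append.2 ⟨hchain_c2.take _, hchain_c1.drop _, ?_⟩
    intro x hx y hy
    rw [htake_last, Option.mem_some_iff] at hx
    rw [List.head?_drop] at hy
    by_cases hlt : j + 1 < c₁.length
    · rw [List.getElem?_eq_getElem hlt, Option.mem_some_iff] at hy
      subst hx; subst hy
      rw [← heq]
      exact List.isChain_iff_getElem.1 hchain_c1 j (by omega)
    · rw [List.getElem?_eq_none (by omega)] at hy
      simp at hy
  have hApclast : (p ++ c₁).getLast? = c₁.getLast? := by
    rw [List.getLast?_append, hc₁last]; rfl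
  have hchain := pump_aux B (c₂ ++ s) hBne hBchain hBh m (p ++ c₁) hpath'
    (hBl.trans hApclast.symm)
  refine ⟨by simpa [List.append_assoc] using hchain, ?_, ?_⟩
  · cases hc : c₁.head? with
    | none => exact absurd (List.head?_eq_none_iff.1 hc) hc₁ne
    | some b => simp [List.head?_append, hc]
  · cases hc : c₂.getLast? with
    | none => exact absurd (List.getLast?_eq_none_iff.1 hc) hc₂ne
    | some b => cases hs : s.getLast? <;> simp [List.getLast?_append, hc, hs]
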